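/- For any integer n ≥ 2 and elements q, t of a commutative ring R, det[q^{|j−k|} + t]_{1≤j,k≤n} = (1−q)^{n−1}·(1+q)^{n−2}·((n·(1−q) + 2q)·t + q + 1). -/

import Mathlib

open Finset Matrix

section helpers
variable {R : Type*} [CommRing R]

lemma detA' {n : ℕ} (d v : Fin n → R) (i : Fin n) :
    ((Matrix.diagonal d).updateRow i v).det = v i * ∏ j ∈ Finset.univ.erase i, d j := by
  have h : (Matrix.diagonal d).updateRow i v = ((Matrix.diagonal d).updateCol i v)ᵀ := by
    ext j k
    by_cases hj : j = i <;>
      simp [Matrix.updateRow_apply, Matrix.updateCol_apply, hj, Matrix.transpose_apply,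
        Matrix.diagonal_apply, eq_comm]
    · split <;> simp_all
  rw [h, Matrix.det_transpose, ← Matrix.cramer_apply, Matrix.cramer_eq_adjugate_mulVec,
    Matrix.adjugate_diagonal, Matrix.mulVec_diagonal, mul_comm]

lemma detB' {n : ℕ} (d u v : Fin n → R) :
    (Matrix.of fun i j => Matrix.diagonal d i j + u i * v j).det
      = (∏ i, d i) + ∑ i, u i * v i * ∏ j ∈ Finset.univ.erase i, d j := by
  classical
  set f := (Matrix.detRowAlternating : (Fin n → R) [⋀^Fin n]→ₗ[R] R) with hf
  have hdet : ∀ (N : Matrix (Fin n) (Fin n) R), f N = N.det := fun _ => rfl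
  set m : Fin n → Fin n → R := fun i => u i • v with hm
  set m' : Fin n → Fin n → R := fun i => Matrix.diagonal d i with hm'
  have hM : (Matrix.of fun i j => Matrix.diagonal d i j + u i * v j) = m + m' := by
    ext i j
    simp only [Matrix.of_apply, Pi.add_apply, hm, hm', Pi.smul_apply, smul_eq_mul]
    ring
  have key : (Matrix.of fun i j => Matrix.diagonal d i j + u i * v j).det
      = ∑ s : Finset (Fin n), f (s.piecewise m m') := by
    rw [hM]; show f (m + m') = _
    exact f.toMultilinearMap.map_add_univ m m'
  have hzero : ∀ s : Finset (Fin n), 2 ≤ s.card → f (s.piecewise m m') = 0 := by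
    intro s hs
    obtain ⟨i, hi, j, hj, hij⟩ := Finset.one_lt_card.mp hs
    set X := s.piecewise m m' with hX
    have hXi : X i = u i • v := s.piecewise_eq_of_mem _ _ hi
    have hXj : X j = u j • v := s.piecewise_eq_of_mem _ _ hj
    have e1 : f X = u i • f (Function.update X i v) := by
      conv_lhs => rw [← Function.update_eq_self i X, hXi]
      exact f.map_update_smul X i (u i) v
    have e2 : f (Function.update X i v)
        = u j • f (Function.update (Function.update X i v) j v) := by
      conv_lhs => rw [← Function.update_eq_self j (Function.update X i v),
        Function.update_of_ne hij.symm, hXj]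
      exact f.map_update_smul _ j (u j) v
    have e3 : f (Function.update (Function.update X i v) j v) = 0 := by
      apply f.map_eq_zero_of_eq _ _ hij
      rw [Function.update_of_ne hij, Function.update_self, Function.update_self]
    rw [e1, e2, e3, smul_zero, smul_zero]
  have hempty : f ((∅ : Finset (Fin n)).piecewise m m') = ∏ i, d i := by
    rw [Finset.piecewise_empty]; show f (Matrix.diagonal d) = _; rw [hdet]
    exact Matrix.det_diagonal
  have hsingle : ∀ i : Fin n, f (({i} : Finset (Fin n)).piecewise m m')
      = u i * v i * ∏ j ∈ Finset.univ.erase i, d j := by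
    intro i
    rw [Finset.piecewise_singleton]
    have : Function.update m' i (m i) = (Matrix.diagonal d).updateRow i (u i • v) := rfl
    rw [this, hdet, Matrix.det_updateRow_smul, detA']
    ring
  rw [key]
  rw [← Finset.sum_filter_add_sum_filter_not Finset.univ (fun s : Finset (Fin n) => s.card ≤ 1)]
  have h2 : ∑ s ∈ Finset.univ.filter (fun s : Finset (Fin n) => ¬ s.card ≤ 1),
      f (s.piecewise m m') = 0 := by
    apply Finset.sum_eq_zero
    intro s hs
    simp only [Finset.mem_filter, not_le] at hs
    exact hzero s hs.2
  rw [h2, add_zero]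
  have hset : Finset.univ.filter (fun s : Finset (Fin n) => s.card ≤ 1)
      = insert ∅ (Finset.univ.image fun i : Fin n => ({i} : Finset (Fin n))) := by
    ext s
    simp only [Finset.mem_filter, Finset.mem_univ, true_and, Finset.mem_insert,
      Finset.mem_image]
    constructor
    · intro h
      rcases Nat.le_one_iff_eq_zero_or_eq_one.mp h with h | h
      · exact Or.inl (Finset.card_eq_zero.mp h)
      · obtain ⟨a, rfl⟩ := Finset.card_eq_one.mp h
        exact Or.inr ⟨a, rfl⟩
    · rintro (rfl | ⟨x, rfl⟩) <;> simp
  rw [hset, Finset.sum_insert (by simp), Finset.sum_image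
    (fun a _ b _ h => Finset.singleton_injective h)]
  rw [hempty]
  congr 1
  exact Finset.sum_congr rfl fun i _ => hsingle i

lemma sum_coe_eq {n m : ℕ} (f : Fin n → R) :
    ∑ r : Fin n, (if (r : ℕ) = m then f r else 0) = if h : m < n then f ⟨m, h⟩ else 0 := by
  split_ifs with h
  · rw [Finset.sum_eq_single (⟨m, h⟩ : Fin n)]
    · simp
    · intro b _ hb
      rw [if_neg (fun hc => hb (Fin.ext hc))]
    · simp
  · apply Finset.sum_eq_zero
    intro r _
    rw [if_neg]
    have := r.isLt
    omega

lemma mulE {n : ℕ} (q : R) (M : Matrix (Fin n) (Fin n) R) (j k : Fin n) :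
    (M * (Matrix.of fun r s : Fin n =>
        (if r = s then (1 : R) else 0) - q * (if (r : ℕ) = (s : ℕ) + 1 then 1 else 0))) j k
      = M j k - q * (if h : (k : ℕ) + 1 < n then M j ⟨(k : ℕ) + 1, h⟩ else 0) := by
  rw [Matrix.mul_apply]
  simp only [Matrix.of_apply, mul_sub]
  rw [Finset.sum_sub_distrib]
  congr 1
  · simp [mul_ite]
  · have : ∀ r : Fin n, M j r * (q * (if (r : ℕ) = (k : ℕ) + 1 then (1:R) else 0))
        = q * (if (r : ℕ) = (k : ℕ) + 1 then M j r else 0) := by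
      intro r; split_ifs <;> ring
    rw [Finset.sum_congr rfl (fun r _ => this r), ← Finset.mul_sum, sum_coe_eq]

lemma mulF {n : ℕ} (q : R) (M : Matrix (Fin n) (Fin n) R) (j k : Fin n) :
    ((Matrix.of fun r s : Fin n =>
        (if r = s then (1 : R) else 0) - q * (if (s : ℕ) = (r : ℕ) + 1 then 1 else 0)) * M) j k
      = M j k - q * (if h : (j : ℕ) + 1 < n then M ⟨(j : ℕ) + 1, h⟩ k else 0) := by
  rw [Matrix.mul_apply]
  simp only [Matrix.of_apply, sub_mul]
  rw [Finset.sum_sub_distrib]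
  congr 1
  · simp [ite_mul]
  · have : ∀ r : Fin n, q * (if (r : ℕ) = (j : ℕ) + 1 then (1:R) else 0) * M r k
        = q * (if (r : ℕ) = (j : ℕ) + 1 then M r k else 0) := by
      intro r; split_ifs <;> ring
    rw [Finset.sum_congr rfl (fun r _ => this r), ← Finset.mul_sum, sum_coe_eq]

lemma card_lt_filter {n m : ℕ} (hm : m ≤ n) :
    (Finset.univ.filter (fun i : Fin n => (i : ℕ) < m)).card = m := by
  apply Finset.card_eq_of_bijective (fun i hi => ⟨i, lt_of_lt_of_le hi hm⟩)
  · intro a ha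
    simp only [Finset.mem_filter] at ha
    exact ⟨a, ha.2, Fin.ext rfl⟩
  · intro i hi
    simp [hi]
  · intro i j hi hj hij
    simpa [Fin.ext_iff] using hij

lemma detE {n : ℕ} (q : R) :
    (Matrix.of fun r s : Fin n =>
        (if r = s then (1 : R) else 0) - q * (if (r : ℕ) = (s : ℕ) + 1 then 1 else 0)).det = 1 := by
  rw [Matrix.det_of_lowerTriangular]
  · apply Finset.prod_eq_one
    intro i _
    simp
  · intro i j hij
    have h : (i : ℕ) < (j : ℕ) := hij
    simp only [Matrix.of_apply]
    rw [if_neg (fun hc => by omega : ¬ i = j), if_neg (by omega)]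
    ring

lemma detF {n : ℕ} (q : R) :
    (Matrix.of fun r s : Fin n =>
        (if r = s then (1 : R) else 0) - q * (if (s : ℕ) = (r : ℕ) + 1 then 1 else 0)).det = 1 := by
  rw [Matrix.det_of_upperTriangular]
  · apply Finset.prod_eq_one
    intro i _
    simp
  · intro i j hij
    have h : (j : ℕ) < (i : ℕ) := hij
    simp only [Matrix.of_apply]
    rw [if_neg (fun hc => by omega : ¬ i = j), if_neg (by omega)]
    ring

def ddf (q : R) (m : ℕ) : Fin (m+2) → R := fun i => if (i : ℕ) < m + 1 then 1 - q^2 else 1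
def uuf (q t : R) (m : ℕ) : Fin (m+2) → R := fun j => t * (if (j : ℕ) < m + 1 then 1 - q else 1)
def vvf (q : R) (m : ℕ) : Fin (m+2) → R := fun k => if (k : ℕ) < m + 1 then 1 - q else 1

lemma key_prod (q t : R) (N : ℕ) :
    (Matrix.of fun j k : Fin (N+2) =>
        (if j = k then (1 : R) else 0) - q * (if (k : ℕ) = (j : ℕ) + 1 then 1 else 0)) *
      (Matrix.of fun j k : Fin (N+2) => q ^ ((j : ℤ) - (k : ℤ)).natAbs + t) *
      (Matrix.of fun r s : Fin (N+2) =>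
        (if r = s then (1 : R) else 0) - q * (if (r : ℕ) = (s : ℕ) + 1 then 1 else 0))
    = Matrix.of fun j k : Fin (N+2) =>
        Matrix.diagonal (ddf q N) j k + uuf q t N j * vvf q N k := by
  ext j k
  rw [Matrix.mul_assoc, mulF]
  simp only [mulE]
  simp only [Matrix.of_apply, Matrix.diagonal_apply, ddf, uuf, vvf]
  have hjlt := j.isLt
  have hklt := k.isLt
  by_cases hj : (j : ℕ) + 1 < N + 2
  · by_cases hk : (k : ℕ) + 1 < N + 2
    · simp only [dif_pos hj, dif_pos hk]
      rcases lt_trichotomy ((j : ℕ)) ((k : ℕ)) with h | h | h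
      · have hne : ¬ j = k := fun hc => by subst hc; omega
        obtain ⟨a, ha⟩ : ∃ a, (k : ℕ) - (j : ℕ) = a + 1 := ⟨(k:ℕ) - (j:ℕ) - 1, by omega⟩
        have hjc : (j:ℕ) < N+1 := by omega
        have hkc : (k:ℕ) < N+1 := by omega
        simp only [if_neg hne, if_pos hjc, if_pos hkc]
        rw [show ((j : ℤ) - (k : ℤ)).natAbs = a + 1 by omega,
          show ((j : ℤ) - ((⟨(k:ℕ)+1, hk⟩ : Fin (N+2)) : ℤ)).natAbs = a + 1 + 1 by
            simp only [Fin.val_mk]; omega,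
          show (((⟨(j:ℕ)+1, hj⟩ : Fin (N+2)) : ℤ) - (k : ℤ)).natAbs = a by
            simp only [Fin.val_mk]; omega,
          show (((⟨(j:ℕ)+1, hj⟩ : Fin (N+2)) : ℤ) - ((⟨(k:ℕ)+1, hk⟩ : Fin (N+2)) : ℤ)).natAbs
              = a + 1 by simp only [Fin.val_mk]; omega]
        simp only [pow_succ]
        ring
      · have heq : j = k := Fin.val_injective h
        subst heq
        have hjc : (j:ℕ) < N+1 := by omega
        simp only [eq_self_iff_true, if_true, if_pos hjc]
        rw [show ((j : ℤ) - (j : ℤ)).natAbs = 0 by omega,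
          show ((j : ℤ) - ((⟨(j:ℕ)+1, hk⟩ : Fin (N+2)) : ℤ)).natAbs = 1 by
            simp only [Fin.val_mk]; omega,
          show (((⟨(j:ℕ)+1, hj⟩ : Fin (N+2)) : ℤ) - (j : ℤ)).natAbs = 1 by
            simp only [Fin.val_mk]; omega,
          show (((⟨(j:ℕ)+1, hj⟩ : Fin (N+2)) : ℤ) - ((⟨(j:ℕ)+1, hk⟩ : Fin (N+2)) : ℤ)).natAbs
              = 0 by simp only [Fin.val_mk]; omega]
        simp only [pow_zero, pow_one]
        ring
      · have hne : ¬ j = k := fun hc => by subst hc; omega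
        obtain ⟨a, ha⟩ : ∃ a, (j : ℕ) - (k : ℕ) = a + 1 := ⟨(j:ℕ) - (k:ℕ) - 1, by omega⟩
        have hjc : (j:ℕ) < N+1 := by omega
        have hkc : (k:ℕ) < N+1 := by omega
        simp only [if_neg hne, if_pos hjc, if_pos hkc]
        rw [show ((j : ℤ) - (k : ℤ)).natAbs = a + 1 by omega,
          show ((j : ℤ) - ((⟨(k:ℕ)+1, hk⟩ : Fin (N+2)) : ℤ)).natAbs = a by
            simp only [Fin.val_mk]; omega,
          show (((⟨(j:ℕ)+1, hj⟩ : Fin (N+2)) : ℤ) - (k : ℤ)).natAbs = a + 1 + 1 by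
            simp only [Fin.val_mk]; omega,
          show (((⟨(j:ℕ)+1, hj⟩ : Fin (N+2)) : ℤ) - ((⟨(k:ℕ)+1, hk⟩ : Fin (N+2)) : ℤ)).natAbs
              = a + 1 by simp only [Fin.val_mk]; omega]
        simp only [pow_succ]
        ring
    · -- k = N+1, j < N+1
      have h : (j : ℕ) < (k : ℕ) := by omega
      have hne : ¬ j = k := fun hc => by subst hc; omega
      obtain ⟨a, ha⟩ : ∃ a, (k : ℕ) - (j : ℕ) = a + 1 := ⟨(k:ℕ) - (j:ℕ) - 1, by omega⟩
      simp only [dif_neg hk, dif_pos hj]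
      have hjc : (j:ℕ) < N+1 := by omega
      have hkc : ¬ (k:ℕ) < N+1 := by omega
      simp only [if_neg hne, if_pos hjc, if_neg hkc]
      rw [show ((j : ℤ) - (k : ℤ)).natAbs = a + 1 by omega,
        show (((⟨(j:ℕ)+1, hj⟩ : Fin (N+2)) : ℤ) - (k : ℤ)).natAbs = a by
          simp only [Fin.val_mk]; omega]
      simp only [pow_succ]
      ring
  · by_cases hk : (k : ℕ) + 1 < N + 2
    · -- j = N+1, k < N+1
      have h : (k : ℕ) < (j : ℕ) := by omega
      have hne : ¬ j = k := fun hc => by subst hc; omega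
      obtain ⟨a, ha⟩ : ∃ a, (j : ℕ) - (k : ℕ) = a + 1 := ⟨(j:ℕ) - (k:ℕ) - 1, by omega⟩
      simp only [dif_neg hj, dif_pos hk]
      have hjc : ¬ (j:ℕ) < N+1 := by omega
      have hkc : (k:ℕ) < N+1 := by omega
      simp only [if_neg hne, if_neg hjc, if_pos hkc]
      rw [show ((j : ℤ) - (k : ℤ)).natAbs = a + 1 by omega,
        show ((j : ℤ) - ((⟨(k:ℕ)+1, hk⟩ : Fin (N+2)) : ℤ)).natAbs = a by
          simp only [Fin.val_mk]; omega]
      simp only [pow_succ]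
      ring
    · have heq : j = k := Fin.val_injective (by omega)
      subst heq
      have hjc : ¬ (j:ℕ) < N+1 := by omega
      rw [show ((j : ℤ) - (j : ℤ)).natAbs = 0 by omega]
      simp only [dif_neg hj, dif_neg hk, if_neg hjc, eq_self_iff_true, if_true, pow_zero]
      ring

end helpers

theorem stmt_12 {R : Type*} [CommRing R] (q t : R) (n : ℕ) (hn : 2 ≤ n) :
    Matrix.det (Matrix.of fun j k : Fin n => q ^ ((j : ℤ) - (k : ℤ)).natAbs + t) =
      (1 - q) ^ (n - 1) * (1 + q) ^ (n - 2) * (((n : R) * (1 - q) + 2 * q) * t + q + 1) := by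
  classical
  obtain ⟨N, rfl⟩ : ∃ N, n = N + 2 := ⟨n - 2, by omega⟩
  have hd := congrArg Matrix.det (key_prod q t N)
  rw [Matrix.det_mul, Matrix.det_mul, detF, detE, one_mul, mul_one,
    detB' (ddf q N) (uuf q t N) (vvf q N)] at hd
  rw [hd]
  -- compute the product
  have hprod : (∏ i, ddf q N i) = (1 - q^2)^(N+1) := by
    unfold ddf
    rw [Finset.prod_ite, Finset.prod_const, Finset.prod_const, one_pow, mul_one,
      card_lt_filter (by omega)]
  -- erase products
  have hP : ∀ i : Fin (N+2), (∏ j ∈ Finset.univ.erase i, ddf q N j)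
      = if (i : ℕ) < N + 1 then (1 - q^2)^N else (1 - q^2)^(N+1) := by
    intro i
    unfold ddf
    rw [Finset.prod_ite, Finset.prod_const, Finset.prod_const, one_pow, mul_one]
    by_cases hi : (i : ℕ) < N + 1
    · rw [if_pos hi]
      congr 1
      rw [Finset.filter_erase, Finset.card_erase_of_mem
        (Finset.mem_filter.mpr ⟨Finset.mem_univ i, hi⟩), card_lt_filter (by omega)]
      omega
    · rw [if_neg hi]
      congr 1
      rw [Finset.filter_erase, Finset.erase_eq_of_notMem
        (show i ∉ Finset.univ.filter (fun x : Fin (N+2) => (x : ℕ) < N + 1) from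
          fun hc => hi (Finset.mem_filter.mp hc).2), card_lt_filter (by omega)]
  have hsum : (∑ i, uuf q t N i * vvf q N i * ∏ j ∈ Finset.univ.erase i, ddf q N j)
      = (N+1) * (t * (1-q)^2 * (1-q^2)^N) + t * (1-q^2)^(N+1) := by
    have hterm : ∀ i : Fin (N+2), uuf q t N i * vvf q N i * ∏ j ∈ Finset.univ.erase i, ddf q N j
        = if (i : ℕ) < N + 1 then t * (1-q)^2 * (1-q^2)^N else t * (1-q^2)^(N+1) := by
      intro i
      rw [hP i]
      unfold uuf vvf
      by_cases hi : (i : ℕ) < N + 1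
      · simp only [if_pos hi]; ring
      · simp only [if_neg hi]; ring
    rw [Finset.sum_congr rfl (fun i _ => hterm i), Finset.sum_ite, Finset.sum_const,
      Finset.sum_const, card_lt_filter (by omega)]
    have hcard : (Finset.univ.filter (fun i : Fin (N+2) => ¬ (i : ℕ) < N + 1)).card = 1 := by
      have h1 := Finset.card_filter_add_card_filter_not
        (s := (Finset.univ : Finset (Fin (N+2)))) (p := fun i : Fin (N+2) => (i : ℕ) < N + 1)
      rw [card_lt_filter (by omega), Finset.card_univ, Fintype.card_fin] at h1
      omega
    rw [hcard, nsmul_eq_mul, nsmul_eq_mul]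
    push_cast
    ring
  rw [hprod, hsum]
  have h1 : N + 2 - 1 = N + 1 := by omega
  have h2 : N + 2 - 2 = N := by omega
  rw [h1, h2]
  have h3 : (1 - q^2 : R) = (1-q) * (1+q) := by ring
  rw [h3]
  simp only [mul_pow, pow_succ]
  push_cast
  ring
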